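/- Let $l \ge 2$, $N \ge 2$ be integers and $v > l/(l-1)$ real. Then there exist constants $c_1, c_2 > 0$ depending only on $l, v$ such that $c_1 N^{v(l-1)} \le \sum_{k=0}^{N-1} \left( \frac{N^v - (k+1)^v}{(k+1)^v - k^v} + 1 \right)^{l-1} \le c_2 N^{v(l-1)}$. -/

import Mathlib

set_option maxHeartbeats 1000000 in
theorem cell_count_supercritical (l : ℕ) (hl : 2 ≤ l) (v : ℝ)
    (hv : (l : ℝ) / (l - 1) < v) :
    ∃ c₁ c₂ : ℝ, 0 < c₁ ∧ 0 < c₂ ∧ ∀ N : ℕ, 2 ≤ N →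
      c₁ * (N : ℝ) ^ (v * (l - 1)) ≤
        ∑ k ∈ Finset.range N,
          (((N : ℝ) ^ v - (k + 1 : ℝ) ^ v) / ((k + 1 : ℝ) ^ v - (k : ℝ) ^ v) + 1) ^ (l - 1) ∧
      ∑ k ∈ Finset.range N,
          (((N : ℝ) ^ v - (k + 1 : ℝ) ^ v) / ((k + 1 : ℝ) ^ v - (k : ℝ) ^ v) + 1) ^ (l - 1)
        ≤ c₂ * (N : ℝ) ^ (v * (l - 1)) := by
  have hl1 : (1:ℝ) ≤ (l:ℝ) - 1 := by
    have : (2:ℝ) ≤ (l:ℝ) := by exact_mod_cast hl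
    linarith
  have hl0 : (0:ℝ) < (l:ℝ) - 1 := by linarith
  have hv1 : 1 < v := by
    have h1 : (1:ℝ) < (l:ℝ) / ((l:ℝ) - 1) := by
      rw [lt_div_iff₀ hl0]; linarith
    linarith
  have hv0 : 0 < v := by linarith
  have hcast : ((l - 1 : ℕ) : ℝ) = (l:ℝ) - 1 := by
    have : 1 ≤ l := le_trans (by norm_num) hl
    push_cast [Nat.cast_sub this]; ring
  set s : ℝ := (v - 1) * ((l:ℝ) - 1) with hs_def
  have hs1 : 1 < s := by
    have h1 : (l:ℝ) < v * ((l:ℝ) - 1) := by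
      rwa [div_lt_iff₀ hl0] at hv
    have : s = v * ((l:ℝ) - 1) - ((l:ℝ) - 1) := by ring
    rw [this]; linarith
  have hsum : Summable (fun n : ℕ => 1 / (n:ℝ) ^ s) :=
    Real.summable_one_div_nat_rpow.mpr hs1
  set C : ℝ := ∑' n : ℕ, 1 / (n:ℝ) ^ s with hC_def
  have hC0 : 0 ≤ C := tsum_nonneg (fun n => by positivity)
  refine ⟨1, 1 + 2 ^ (l - 1) * C, one_pos, by positivity, ?_⟩
  intro N hN
  have hN1 : (1:ℝ) ≤ (N:ℝ) := by exact_mod_cast le_trans (by norm_num) hN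
  have hN0 : (0:ℝ) ≤ (N:ℝ) := by linarith
  -- basic facts about terms
  have hterm_nonneg : ∀ k ∈ Finset.range N,
      0 ≤ (((N : ℝ) ^ v - (k + 1 : ℝ) ^ v) / ((k + 1 : ℝ) ^ v - (k : ℝ) ^ v) + 1) ^ (l - 1) := by
    intro k hk
    have hkN : (k:ℝ) + 1 ≤ (N:ℝ) := by
      have := Finset.mem_range.mp hk
      exact_mod_cast Nat.succ_le_of_lt this
    have h1 : ((k:ℝ) + 1) ^ v ≤ (N:ℝ) ^ v :=
      Real.rpow_le_rpow (by positivity) hkN (le_of_lt hv0)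
    have h2 : (k:ℝ) ^ v < ((k:ℝ) + 1) ^ v :=
      Real.rpow_lt_rpow (by positivity) (by linarith) hv0
    have hbase : 0 ≤ ((N : ℝ) ^ v - ((k:ℝ) + 1) ^ v) / (((k:ℝ) + 1) ^ v - (k : ℝ) ^ v) + 1 := by
      have : 0 ≤ ((N : ℝ) ^ v - ((k:ℝ) + 1) ^ v) / (((k:ℝ) + 1) ^ v - (k : ℝ) ^ v) :=
        div_nonneg (by linarith) (by linarith)
      linarith
    positivity
  -- the k = 0 term equals N ^ (v * (l-1))
  have hpow_eq : ((N:ℝ) ^ v) ^ (l - 1) = (N:ℝ) ^ (v * ((l:ℝ) - 1)) := by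
    rw [← hcast, ← Real.rpow_natCast ((N:ℝ) ^ v) (l - 1), ← Real.rpow_mul hN0]
  have hterm0 : (((N : ℝ) ^ v - ((0:ℝ) + 1) ^ v) / (((0:ℝ) + 1) ^ v - (0 : ℝ) ^ v) + 1) ^ (l - 1)
      = (N:ℝ) ^ (v * ((l:ℝ) - 1)) := by
    rw [← hpow_eq]
    congr 1
    rw [zero_add, Real.one_rpow, Real.zero_rpow (ne_of_gt hv0)]
    ring
  constructor
  · -- lower bound
    rw [one_mul]
    calc (N : ℝ) ^ (v * ((l:ℝ) - 1))
        = (((N : ℝ) ^ v - ((0:ℕ) + 1 : ℝ) ^ v) / (((0:ℕ) + 1 : ℝ) ^ v - ((0:ℕ) : ℝ) ^ v) + 1) ^ (l - 1) := by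
          rw [← hterm0]; norm_num
      _ ≤ _ := by
          apply Finset.single_le_sum hterm_nonneg
          exact Finset.mem_range.mpr (by omega)
  · -- upper bound
    have hsplit : ∑ k ∈ Finset.range N,
        (((N : ℝ) ^ v - (k + 1 : ℝ) ^ v) / ((k + 1 : ℝ) ^ v - (k : ℝ) ^ v) + 1) ^ (l - 1)
        = (((N : ℝ) ^ v - ((0:ℕ) + 1 : ℝ) ^ v) / (((0:ℕ) + 1 : ℝ) ^ v - ((0:ℕ) : ℝ) ^ v) + 1) ^ (l - 1)
          + ∑ k ∈ Finset.Ico 1 N,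
            (((N : ℝ) ^ v - (k + 1 : ℝ) ^ v) / ((k + 1 : ℝ) ^ v - (k : ℝ) ^ v) + 1) ^ (l - 1) := by
      rw [Finset.range_eq_Ico, Finset.sum_eq_sum_Ico_succ_bot (by omega)]
    rw [hsplit]
    have hterm0' : (((N : ℝ) ^ v - ((0:ℕ) + 1 : ℝ) ^ v) / (((0:ℕ) + 1 : ℝ) ^ v - ((0:ℕ) : ℝ) ^ v) + 1) ^ (l - 1)
        = (N:ℝ) ^ (v * ((l:ℝ) - 1)) := by
      rw [← hterm0]; norm_num
    rw [hterm0']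
    have hkey : ∀ k ∈ Finset.Ico 1 N,
        (((N : ℝ) ^ v - (k + 1 : ℝ) ^ v) / ((k + 1 : ℝ) ^ v - (k : ℝ) ^ v) + 1) ^ (l - 1)
        ≤ 2 ^ (l - 1) * (N:ℝ) ^ (v * ((l:ℝ) - 1)) * (1 / (k:ℝ) ^ s) := by
      intro k hk
      obtain ⟨hk1, hkN⟩ := Finset.mem_Ico.mp hk
      have hk1' : (1:ℝ) ≤ (k:ℝ) := by exact_mod_cast hk1
      have hk0 : (0:ℝ) < (k:ℝ) := by linarith
      have hkN' : (k:ℝ) + 1 ≤ (N:ℝ) := by exact_mod_cast Nat.succ_le_of_lt hkN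
      -- denominator lower bound via Bernoulli
      have hdenom : (k:ℝ) ^ (v - 1) ≤ ((k:ℝ) + 1) ^ v - (k:ℝ) ^ v := by
        have hfac : ((k:ℝ) + 1) ^ v = (k:ℝ) ^ v * (1 + 1/(k:ℝ)) ^ v := by
          rw [← Real.mul_rpow (by positivity) (by positivity)]
          congr 1
          field_simp
        have hbern : 1 + v * (1/(k:ℝ)) ≤ (1 + 1/(k:ℝ)) ^ v :=
          one_add_mul_self_le_rpow_one_add (le_trans (by norm_num : (-1:ℝ) ≤ 0) (by positivity)) (le_of_lt hv1)
        have h1 : 1 + 1/(k:ℝ) ≤ (1 + 1/(k:ℝ)) ^ v := by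
          have : 1 + 1 * (1/(k:ℝ)) ≤ 1 + v * (1/(k:ℝ)) := by
            have : (0:ℝ) ≤ 1/(k:ℝ) := by positivity
            nlinarith
          linarith
        have h2 : (k:ℝ) ^ v * (1 + 1/(k:ℝ)) ≤ ((k:ℝ) + 1) ^ v := by
          rw [hfac]
          exact mul_le_mul_of_nonneg_left h1 (by positivity)
        have h3 : (k:ℝ) ^ v * (1/(k:ℝ)) = (k:ℝ) ^ (v - 1) := by
          rw [Real.rpow_sub hk0, Real.rpow_one]
          field_simp
        nlinarith [Real.rpow_pos_of_pos hk0 v]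
      have hdenom_pos : (0:ℝ) < (k:ℝ) ^ (v - 1) := Real.rpow_pos_of_pos hk0 _
      have hnum : (N : ℝ) ^ v - ((k:ℝ) + 1) ^ v ≤ (N:ℝ) ^ v := by
        have : (0:ℝ) ≤ ((k:ℝ) + 1) ^ v := by positivity
        linarith
      have hnum0 : (0:ℝ) ≤ (N : ℝ) ^ v - ((k:ℝ) + 1) ^ v := by
        have : ((k:ℝ) + 1) ^ v ≤ (N:ℝ) ^ v :=
          Real.rpow_le_rpow (by positivity) hkN' (le_of_lt hv0)
        linarith
      have hratio : ((N : ℝ) ^ v - ((k:ℝ) + 1) ^ v) / (((k:ℝ) + 1) ^ v - (k:ℝ) ^ v)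
          ≤ (N:ℝ) ^ v / (k:ℝ) ^ (v - 1) :=
        div_le_div₀ (by positivity) hnum hdenom_pos hdenom
      have hone : (1:ℝ) ≤ (N:ℝ) ^ v / (k:ℝ) ^ (v - 1) := by
        rw [le_div_iff₀ hdenom_pos, one_mul]
        calc (k:ℝ) ^ (v - 1) ≤ (N:ℝ) ^ (v - 1) :=
              Real.rpow_le_rpow (le_of_lt hk0) (by linarith) (by linarith)
          _ ≤ (N:ℝ) ^ v := Real.rpow_le_rpow_of_exponent_le hN1 (by linarith)
      have hbase : ((N : ℝ) ^ v - ((k:ℝ) + 1) ^ v) / (((k:ℝ) + 1) ^ v - (k:ℝ) ^ v) + 1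
          ≤ 2 * ((N:ℝ) ^ v * (1 / (k:ℝ) ^ (v - 1))) := by
        have : (N:ℝ) ^ v * (1 / (k:ℝ) ^ (v - 1)) = (N:ℝ) ^ v / (k:ℝ) ^ (v - 1) := by ring
        rw [this]; linarith
      have hbase0 : 0 ≤ ((N : ℝ) ^ v - ((k:ℝ) + 1) ^ v) / (((k:ℝ) + 1) ^ v - (k:ℝ) ^ v) + 1 := by
        have h2 : (k:ℝ) ^ v < ((k:ℝ) + 1) ^ v :=
          Real.rpow_lt_rpow (le_of_lt hk0) (by linarith) hv0
        have : 0 ≤ ((N : ℝ) ^ v - ((k:ℝ) + 1) ^ v) / (((k:ℝ) + 1) ^ v - (k:ℝ) ^ v) :=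
          div_nonneg hnum0 (by linarith)
        linarith
      calc (((N : ℝ) ^ v - ((k:ℝ) + 1) ^ v) / (((k:ℝ) + 1) ^ v - (k:ℝ) ^ v) + 1) ^ (l - 1)
          ≤ (2 * ((N:ℝ) ^ v * (1 / (k:ℝ) ^ (v - 1)))) ^ (l - 1) :=
            pow_le_pow_left₀ hbase0 hbase _
        _ = 2 ^ (l - 1) * (N:ℝ) ^ (v * ((l:ℝ) - 1)) * (1 / (k:ℝ) ^ s) := by
            rw [mul_pow, mul_pow, hpow_eq, one_div, inv_pow, ← Real.rpow_natCast ((k:ℝ) ^ (v - 1)) (l - 1),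
              ← Real.rpow_mul (le_of_lt hk0), hcast, one_div, mul_assoc]
    calc (N:ℝ) ^ (v * ((l:ℝ) - 1))
          + ∑ k ∈ Finset.Ico 1 N,
            (((N : ℝ) ^ v - (k + 1 : ℝ) ^ v) / ((k + 1 : ℝ) ^ v - (k : ℝ) ^ v) + 1) ^ (l - 1)
        ≤ (N:ℝ) ^ (v * ((l:ℝ) - 1))
          + ∑ k ∈ Finset.Ico 1 N, 2 ^ (l - 1) * (N:ℝ) ^ (v * ((l:ℝ) - 1)) * (1 / (k:ℝ) ^ s) := by
          have h := Finset.sum_le_sum hkey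
          linarith
      _ = (N:ℝ) ^ (v * ((l:ℝ) - 1))
          + 2 ^ (l - 1) * (N:ℝ) ^ (v * ((l:ℝ) - 1)) * ∑ k ∈ Finset.Ico 1 N, (1 / (k:ℝ) ^ s) := by
          rw [Finset.mul_sum]
      _ ≤ (N:ℝ) ^ (v * ((l:ℝ) - 1)) + 2 ^ (l - 1) * (N:ℝ) ^ (v * ((l:ℝ) - 1)) * C := by
          have := Summable.sum_le_tsum (Finset.Ico 1 N) (fun i _ => by positivity : ∀ i ∉ Finset.Ico 1 N, 0 ≤ 1 / (i:ℝ) ^ s) hsum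
          have h2 : (0:ℝ) ≤ 2 ^ (l - 1) * (N:ℝ) ^ (v * ((l:ℝ) - 1)) := by positivity
          nlinarith
      _ = (1 + 2 ^ (l - 1) * C) * (N:ℝ) ^ (v * ((l:ℝ) - 1)) := by ring
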